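/- Let L = Q(√m) be an imaginary quadratic field with m squarefree, m < 0, and m ≢ 1 (mod 4). Then the minimum of the absolute multiplicative Weil height H(α) over algebraic integers α ∈ O_L with L = Q(α) equals (1/2)|Δ_L|^{1/2}, where Δ_L = 4m. -/

import Mathlib

open NumberField

/-- `c_K = (2/π)^{s/d} |Δ_K|^{1/(2d)}`. -/
noncomputable def minkowskiConst (K : Type*) [Field K] [NumberField K] : ℝ :=
  (2 / Real.pi) ^ ((InfinitePlace.nrComplexPlaces K : ℝ) / (Module.finrank ℚ K)) *
    |(discr K : ℝ)| ^ ((1 : ℝ) / (2 * (Module.finrank ℚ K : ℝ)))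

/-- Absolute multiplicative Weil height of an algebraic integer of `K`. -/
noncomputable def intHeight {K : Type*} [Field K] [NumberField K] (α : K) : ℝ :=
  (∏ φ : K →+* ℂ, max 1 ‖φ α‖) ^ ((Module.finrank ℚ K : ℝ)⁻¹)

/-- The normalized absolute value `|·|_v = ‖·‖_v^{d_v/d}` at an infinite place. -/
noncomputable def placeNorm {K : Type*} [Field K] [NumberField K]
    (v : InfinitePlace K) (α : K) : ℝ :=
  (v α) ^ ((v.mult : ℝ) / (Module.finrank ℚ K : ℝ))

open Polynomial in
lemma aux_den (m : ℤ) (hsf : Squarefree m) (u : ℚ) (n : ℤ) (h : (m:ℚ) * u^2 = n) :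
    ∃ C : ℤ, (C:ℚ) = u := by
  have hden : (u.den : ℚ) ≠ 0 := by exact_mod_cast u.den_ne_zero
  have hu : (u.num : ℚ) = u * u.den := by
    rw [← div_eq_iff hden]; exact Rat.num_div_den u
  have key : m * u.num ^ 2 = n * (u.den : ℤ) ^ 2 := by
    have : (m : ℚ) * (u.num:ℚ) ^ 2 = (n:ℚ) * (u.den:ℚ) ^ 2 := by
      rw [hu]; ring_nf; rw [← h]; ring
    exact_mod_cast this
  have hdvd : ((u.den : ℤ))^2 ∣ m * u.num ^ 2 := ⟨n, by linarith [key]⟩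
  have hcop : IsCoprime (u.num) ((u.den : ℤ)) := by
    rw [Int.isCoprime_iff_gcd_eq_one]; exact u.reduced
  have hdvd2 : ((u.den : ℤ))^2 ∣ m :=
    (hcop.symm.pow (n := 2) (m := 2)).dvd_of_dvd_mul_right hdvd
  have hunit : IsUnit ((u.den : ℤ)) := hsf _ (by rwa [← sq])
  have hden1 : u.den = 1 := by
    rcases Int.isUnit_iff.mp hunit with h1 | h1
    · exact_mod_cast h1
    · omega
  exact ⟨u.num, by rw [← Rat.num_div_den u, hden1]; simp⟩

lemma aux_mod4 (t c mz : ZMod 4) (hm : mz = 2 ∨ mz = 3) (h : mz * c^2 = t^2) : c^2 = 0 := by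
  revert hm h; revert t c mz; decide

lemma aux_even (C T N m : ℤ) (hm : m % 4 = 2 ∨ m % 4 = 3) (h : m * C^2 = T^2 - 4*N) :
    2 ∣ C := by
  have h4 : ((m : ZMod 4)) * (C : ZMod 4)^2 = (T : ZMod 4)^2 := by
    have := congrArg (fun x : ℤ => (x : ZMod 4)) h
    push_cast at this
    rw [this]; ring_nf
    simp [show ((4:ℤ) : ZMod 4) = 0 by decide, show (4 : ZMod 4) = 0 by decide]
  have hmz : (m : ZMod 4) = 2 ∨ (m : ZMod 4) = 3 := by
    rcases hm with hm | hm
    · left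
      rw [show ((2:ZMod 4)) = ((2:ℤ) : ZMod 4) by decide, ZMod.intCast_eq_intCast_iff]
      exact show m % 4 = 2 % 4 by omega
    · right
      rw [show ((3:ZMod 4)) = ((3:ℤ) : ZMod 4) by decide, ZMod.intCast_eq_intCast_iff]
      exact show m % 4 = 3 % 4 by omega
  have hc : (C : ZMod 4)^2 = 0 := aux_mod4 _ _ _ hmz h4
  have hc' : ((C^2 : ℤ) : ZMod 4) = 0 := by push_cast; exact hc
  have h4d : (4:ℤ) ∣ C^2 := by
    rwa [ZMod.intCast_zmod_eq_zero_iff_dvd] at hc'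
  have h2d : (2:ℤ) ∣ C^2 := dvd_trans (by norm_num) h4d
  exact Int.prime_two.dvd_of_dvd_pow h2d

lemma aux_abs (mr : ℝ) (hmr : mr < 0) (z : ℂ) (hz : z^2 = (mr:ℂ)) (p q : ℚ) :
    ‖(p:ℂ) + (q:ℂ)*z‖ = Real.sqrt ((p:ℝ)^2 + (q:ℝ)^2 * (-mr)) := by
  have hre : (z^2).re = mr := by rw [hz]; simp
  have him : (z^2).im = 0 := by rw [hz]; simp
  rw [sq] at hre him
  simp only [Complex.mul_re, Complex.mul_im] at hre him
  have hx : z.re = 0 := by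
    rcases mul_eq_zero.mp (by linarith : z.re * z.im = 0) with h | h
    · exact h
    · exfalso; rw [h] at hre; nlinarith
  have hy : z.im * z.im = -mr := by rw [hx] at hre; linarith
  rw [Complex.norm_def]
  congr 1
  simp [Complex.normSq_apply, Complex.add_re, Complex.add_im, Complex.mul_re, Complex.mul_im, hx]
  ring_nf
  nlinarith [hy]

lemma aux_pow (x : ℝ) (hx : 0 ≤ x) : (x^2) ^ ((2:ℝ))⁻¹ = x := by
  rw [← Real.rpow_natCast x 2, ← Real.rpow_mul hx]
  norm_num

set_option maxHeartbeats 2000000 in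
open Polynomial in
/-- For an imaginary quadratic field $L=\mathbb{Q}(\sqrt m)$ with $m$ squarefree, $m<0$,
$m\not\equiv 1\pmod 4$ (so $\Delta_L = 4m$), the minimum of the Weil height over integral
generators of $L$ is $\frac12|\Delta_L|^{1/2}$. -/
theorem statement1 (m : ℤ) (hsf : Squarefree m) (hneg : m < 0) (hmod : m % 4 ≠ 1)
    (L : Type*) [Field L] [NumberField L] (r : L) (hr : r ^ 2 = (m : L))
    (hgenL : IntermediateField.adjoin ℚ {r} = ⊤)
    (hdisc : discr L = 4 * m) :
    IsLeast {H : ℝ | ∃ α : 𝓞 L, IntermediateField.adjoin ℚ {(α : L)} = ⊤ ∧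
        intHeight (α : L) = H}
      ((1 / 2) * |(4 * m : ℝ)| ^ ((1 : ℝ) / 2)) := by
  classical
  have hm0 : m ≠ 0 := hsf.ne_zero
  have hm1 : m ≤ -1 := by omega
  have hmr : (m:ℝ) < 0 := by exact_mod_cast hneg
  have hmre : (1:ℝ) ≤ -(m:ℝ) := by
    have : (1:ℝ) ≤ ((-m : ℤ) : ℝ) := by exact_mod_cast (by omega : (1:ℤ) ≤ -m)
    push_cast at this; linarith
  -- r is irrational
  have hrirr : ∀ c : ℚ, algebraMap ℚ L c ≠ r := by
    intro c hc
    have h2 : algebraMap ℚ L (c^2) = algebraMap ℚ L ((m:ℚ)) := by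
      rw [map_pow, hc, hr]; simp
    have h3 : (c:ℚ)^2 = (m:ℚ) := (algebraMap ℚ L).injective h2
    have : ((m:ℚ)) < 0 := by exact_mod_cast hneg
    nlinarith [sq_nonneg c]
  have hint_r : IsIntegral ℚ r := IsIntegral.of_finite ℚ r
  -- minpoly of r
  have haev : (Polynomial.aeval r) (X^2 - C ((m:ℚ))) = 0 := by
    simp [hr]
  have hmonr : (X^2 - C ((m:ℚ))).Monic := monic_X_pow_sub_C _ two_ne_zero
  have hdvdr := minpoly.dvd ℚ r haev
  have hge : 2 ≤ (minpoly ℚ r).natDegree := by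
    have h1 := minpoly.natDegree_pos hint_r
    by_contra hlt
    have hnd1 : (minpoly ℚ r).natDegree = 1 := by omega
    have hd1 : (minpoly ℚ r).degree = 1 := by
      rw [Polynomial.degree_eq_natDegree (minpoly.ne_zero hint_r), hnd1]; rfl
    obtain ⟨c, hc⟩ := minpoly.degree_eq_one_iff.mp hd1
    exact hrirr c hc
  have hmp : X^2 - C ((m:ℚ)) = minpoly ℚ r :=
    Polynomial.eq_of_monic_of_dvd_of_natDegree_le (minpoly.monic hint_r) hmonr hdvdr
      (by rw [Polynomial.natDegree_X_pow_sub_C]; exact hge)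
  -- finrank = 2
  have hd2 : Module.finrank ℚ L = 2 := by
    have h := IntermediateField.adjoin.finrank hint_r
    rw [hgenL, IntermediateField.finrank_top', ← hmp, Polynomial.natDegree_X_pow_sub_C] at h
    exact h
  have hcard2 : Fintype.card (L →+* ℂ) = 2 := by
    rw [NumberField.Embeddings.card L ℂ, hd2]
  -- basis 1, r
  have hli : LinearIndependent ℚ ![(1:L), r] := by
    rw [LinearIndependent.pair_iff]
    intro s t hst
    have h1 : algebraMap ℚ L s + algebraMap ℚ L t * r = 0 := by
      rw [← hst]; simp [Algebra.smul_def]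
    have hts : t = 0 := by
      by_contra ht
      apply hrirr (-(s/t))
      have ht' : algebraMap ℚ L t ≠ 0 := by
        simpa using (algebraMap ℚ L).injective.ne ht
      rw [map_neg, map_div₀, neg_eq_iff_eq_neg, div_eq_iff ht']
      linear_combination h1
    constructor
    · rw [hts] at h1
      simp at h1
      exact (algebraMap ℚ L).injective (by simpa using h1)
    · exact hts
  have hcardb : Fintype.card (Fin 2) = Module.finrank ℚ L := by simp [hd2]
  set b := basisOfLinearIndependentOfCardEqFinrank hli hcardb with hbdef
  have hb : ⇑b = ![(1:L), r] := coe_basisOfLinearIndependentOfCardEqFinrank hli hcardb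
  -- the target value is sqrt(-m)
  set S : ℝ := Real.sqrt (-(m:ℝ)) with hSdef
  have hS1 : (1:ℝ) ≤ S := Real.one_le_sqrt.mpr hmre
  have hS0 : (0:ℝ) ≤ S := by linarith
  have hS2 : S^2 = -(m:ℝ) := Real.sq_sqrt (by linarith)
  have htarget : (1 / 2) * |(4 * m : ℝ)| ^ ((1 : ℝ) / 2) = S := by
    have h4m : |(4 * m : ℝ)| = 4 * (-(m:ℝ)) := by
      rw [abs_of_neg (by nlinarith)]; ring
    rw [h4m, ← Real.sqrt_eq_rpow, Real.sqrt_mul (by norm_num : (0:ℝ) ≤ 4),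
      show Real.sqrt 4 = 2 by rw [show (4:ℝ) = 2^2 by norm_num, Real.sqrt_sq (by norm_num)]]
    rw [hSdef]; ring
  rw [htarget]
  -- integrality of r
  have hrint : IsIntegral ℤ r := by
    refine ⟨X^2 - C (m:ℤ), monic_X_pow_sub_C _ two_ne_zero, ?_⟩
    simp only [Polynomial.eval₂_sub, Polynomial.eval₂_X_pow, Polynomial.eval₂_C, hr]
    simp [map_intCast]
  -- the absolute value of embeddings
  have hz : ∀ φ : L →+* ℂ, (φ r)^2 = (((m:ℝ)):ℂ) := by
    intro φ
    rw [← map_pow, hr, map_intCast]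
    push_cast; ring
  constructor
  · -- membership: witness r
    refine ⟨⟨r, hrint⟩, ?_, ?_⟩
    · exact hgenL
    show intHeight r = S
    unfold intHeight
    rw [hd2]
    have habs : ∀ φ : L →+* ℂ, max 1 (‖φ r‖) = S := by
      intro φ
      have h := aux_abs (m:ℝ) hmr (φ r) (hz φ) 0 1
      simp at h
      rw [h]
      exact max_eq_right hS1
    calc (∏ φ : L →+* ℂ, max 1 (‖φ r‖)) ^ (((2:ℕ):ℝ))⁻¹
        = (S^2) ^ ((2:ℝ))⁻¹ := by
          rw [show (∏ φ : L →+* ℂ, max 1 (‖φ r‖)) = S^2 by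
            rw [Finset.prod_congr rfl (fun φ _ => habs φ), Finset.prod_const, Finset.card_univ,
              hcard2]]
          norm_num
      _ = S := aux_pow S hS0
  · -- lower bound
    rintro H ⟨α, hgen, rfl⟩
    have hαQ : IsIntegral ℚ ((α : L)) := IsIntegral.of_finite ℚ _
    set p : ℚ := b.repr (α:L) 0 with hpdef
    set q : ℚ := b.repr (α:L) 1 with hqdef
    have hαeq : (α:L) = algebraMap ℚ L p + algebraMap ℚ L q * r := by
      have h := b.sum_repr (α:L)
      rw [Fin.sum_univ_two] at h
      rw [← h, hb]
      simp [Algebra.smul_def, hpdef, hqdef]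
    have hq0 : q ≠ 0 := by
      intro h0
      have hα' : (α:L) = algebraMap ℚ L p := by rw [hαeq, h0]; simp
      have h1 : IntermediateField.adjoin ℚ {(α:L)} = ⊥ := by
        rw [hα']
        exact IntermediateField.adjoin_simple_eq_bot_iff.mpr
          (IntermediateField.mem_bot.mpr ⟨p, rfl⟩)
      rw [hgen] at h1
      have hrb : r ∈ (⊥ : IntermediateField ℚ L) := h1 ▸ IntermediateField.mem_top
      obtain ⟨c, hc⟩ := IntermediateField.mem_bot.mp hrb
      exact hrirr c hc
    -- α satisfies a monic quadratic
    have haevα : (Polynomial.aeval (α:L)) (X^2 - C (2*p) * X + C (p^2 - (m:ℚ)*q^2)) = 0 := by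
      have hrm : r^2 = algebraMap ℚ L ((m:ℚ)) := by rw [hr]; simp
      simp only [map_add, map_sub, map_mul, map_pow, aeval_X, aeval_C]
      rw [hαeq]
      simp only [map_sub, map_mul, map_pow, map_ofNat]
      linear_combination (algebraMap ℚ L q)^2 * hrm
    have hQmon : (X^2 - C (2*p) * X + C (p^2 - (m:ℚ)*q^2)).Monic := by
      monicity!
    have hQnd : (X^2 - C (2*p) * X + C (p^2 - (m:ℚ)*q^2)).natDegree = 2 := by
      compute_degree!
    have hnd : (minpoly ℚ (α:L)).natDegree = 2 := by
      have h := IntermediateField.adjoin.finrank hαQ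
      rw [hgen, IntermediateField.finrank_top', hd2] at h
      omega
    have hmpα : X^2 - C (2*p) * X + C (p^2 - (m:ℚ)*q^2) = minpoly ℚ (α:L) :=
      Polynomial.eq_of_monic_of_dvd_of_natDegree_le (minpoly.monic hαQ) hQmon
        (minpoly.dvd ℚ _ haevα) (by rw [hQnd, hnd])
    -- integer coefficients
    have hαint : IsIntegral ℤ ((α:L)) := RingOfIntegers.isIntegral_coe α
    have hZ : minpoly ℚ (α:L) = (minpoly ℤ ((α:L))).map (algebraMap ℤ ℚ) := by
      have := minpoly.isIntegrallyClosed_eq_field_fractions ℚ L (S := L) hαint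
      simpa using this
    have hT : ((-(minpoly ℤ ((α:L))).coeff 1 : ℤ) : ℚ) = 2*p := by
      have h := congrArg (fun P => P.coeff 1) hmpα
      simp only [hZ, Polynomial.coeff_map, Polynomial.coeff_add, Polynomial.coeff_sub,
        Polynomial.coeff_C_mul, Polynomial.coeff_X_pow, Polynomial.coeff_C,
        Polynomial.coeff_X_one, eq_intCast] at h
      norm_num at h
      push_cast
      linarith
    have hN : (((minpoly ℤ ((α:L))).coeff 0 : ℤ) : ℚ) = p^2 - (m:ℚ)*q^2 := by
      have h := congrArg (fun P => P.coeff 0) hmpα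
      simp only [hZ, Polynomial.coeff_map, Polynomial.coeff_add, Polynomial.coeff_sub,
        Polynomial.coeff_C_mul, Polynomial.coeff_X_pow, Polynomial.coeff_C,
        Polynomial.coeff_X_zero, eq_intCast] at h
      norm_num at h
      linarith
    set T : ℤ := -(minpoly ℤ ((α:L))).coeff 1 with hTdef
    set N : ℤ := (minpoly ℤ ((α:L))).coeff 0 with hNdef
    have hmq : (m:ℚ) * (2*q)^2 = ((T^2 - 4*N : ℤ) : ℚ) := by
      push_cast
      rw [hT, hN]; ring
    obtain ⟨C2, hC2⟩ := aux_den m hsf (2*q) (T^2 - 4*N) hmq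
    have hC2ne : C2 ≠ 0 := by
      intro h0
      rw [h0] at hC2
      simp at hC2
      exact hq0 (by linarith)
    have hintEq : m * C2^2 = T^2 - 4*N := by
      have : (m:ℚ) * (C2:ℚ)^2 = ((T^2 - 4*N : ℤ) : ℚ) := by rw [hC2]; exact hmq
      exact_mod_cast this
    have hmod4 : m % 4 = 2 ∨ m % 4 = 3 := by
      have h40 : m % 4 ≠ 0 := by
        intro h
        have hdvd4 : (2:ℤ)*2 ∣ m := by omega
        rcases Int.isUnit_iff.mp (hsf 2 hdvd4) with h1 | h1 <;> norm_num at h1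
      omega
    obtain ⟨D, hD⟩ := aux_even C2 T N m hmod4 hintEq
    have hDne : D ≠ 0 := by rintro rfl; simp at hD; exact hC2ne hD
    have hD1 : (1:ℤ) ≤ D^2 := by
      rcases lt_or_gt_of_ne hDne with h | h
      · nlinarith
      · nlinarith
    have hC2sq : (4:ℤ) ≤ C2^2 := by rw [hD]; nlinarith
    have hq2 : (1:ℝ) ≤ (q:ℝ)^2 := by
      have h1 : (4:ℚ) ≤ (2*q)^2 := by
        rw [← hC2]
        exact_mod_cast hC2sq
      have h2 : (1:ℚ) ≤ q^2 := by nlinarith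
      exact_mod_cast h2
    -- each embedding has large absolute value
    have hφ : ∀ φ : L →+* ℂ, S ≤ max 1 (‖φ (α:L)‖) := by
      intro φ
      have habs : ‖φ (α:L)‖ = Real.sqrt ((p:ℝ)^2 + (q:ℝ)^2 * (-(m:ℝ))) := by
        rw [hαeq, map_add, map_mul, eq_ratCast (algebraMap ℚ L) p,
          eq_ratCast (algebraMap ℚ L) q, map_ratCast, map_ratCast]
        exact aux_abs (m:ℝ) hmr (φ r) (hz φ) p q
      have hmono : S ≤ ‖φ (α:L)‖ := by
        rw [habs, hSdef]
        apply Real.sqrt_le_sqrt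
        nlinarith [sq_nonneg (p:ℝ)]
      exact le_trans hmono (le_max_right 1 _)
    unfold intHeight
    rw [hd2]
    have hprod : S^2 ≤ ∏ φ : L →+* ℂ, max 1 (‖φ (α:L)‖) := by
      calc S^2 = ∏ _φ : L →+* ℂ, S := by
            rw [Finset.prod_const, Finset.card_univ, hcard2]
        _ ≤ _ := Finset.prod_le_prod (fun _ _ => hS0) (fun φ _ => hφ φ)
    calc S = (S^2) ^ ((2:ℝ))⁻¹ := (aux_pow S hS0).symm
      _ ≤ (∏ φ : L →+* ℂ, max 1 (‖φ (α:L)‖)) ^ (((2:ℕ):ℝ))⁻¹ := by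
          rw [show (((2:ℕ):ℝ))⁻¹ = ((2:ℝ))⁻¹ by norm_num]
          exact Real.rpow_le_rpow (by positivity) hprod (by norm_num)
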